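/- Let K be a field, let F = {f₁,…,f_s} be nonzero polynomials in K[x₁,…,xₙ] such that each in_ω(fᵢ) is a single monomial, and suppose ω' ∈ ℝⁿ satisfies in_{ω'}(fᵢ) = in_ω(fᵢ) for all i. If the multiplicative monoid generated by {in_ω(fᵢ)} equals the set of all ω-initial monomials of nonzero elements of S = K[f₁,…,f_s] (i.e., F is a SAGBI basis of S with respect to ω), then the same holds with ω replaced by ω' (F is a SAGBI basis of S with respect to ω'). -/

import Mathlib

open MvPolynomial

/-- weight of an exponent vector -/
noncomputable def wdot {n : ℕ} (ω : Fin n → ℝ) (α : Fin n →₀ ℕ) : ℝ :=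
  ∑ i, ω i * (α i : ℝ)

open Classical in
/-- ω-initial form of a polynomial. -/
noncomputable def initForm {K : Type*} [Field K] {n : ℕ} (ω : Fin n → ℝ)
    (f : MvPolynomial (Fin n) K) : MvPolynomial (Fin n) K :=
  ∑ α ∈ f.support.filter (fun α => ∀ β ∈ f.support, wdot ω β ≤ wdot ω α),
    MvPolynomial.monomial α (f.coeff α)

/-- `F = (f i)` is a SAGBI basis of `S = K[f₁,…,f_s]` with respect to the weight `w`:
the (additive) monoid generated by the exponents of the initial monomials of the `f i`
equals the set of exponents of `w`-initial monomials of all nonzero elements of `S`. -/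
def IsSagbiBasis {K : Type*} [Field K] {n s : ℕ} (w : Fin n → ℝ)
    (f : Fin s → MvPolynomial (Fin n) K) : Prop :=
  (AddSubmonoid.closure {α : Fin n →₀ ℕ | ∃ i, (initForm w (f i)).support = {α}} :
      Set (Fin n →₀ ℕ))
    = {α : Fin n →₀ ℕ | ∃ g ∈ Algebra.adjoin K (Set.range f), g ≠ 0 ∧
        (initForm w g).support = {α}}

namespace SagbiAux

variable {K : Type*} [Field K] {n : ℕ}

lemma wdot_add (ω : Fin n → ℝ) (a b : Fin n →₀ ℕ) :
    wdot ω (a + b) = wdot ω a + wdot ω b := by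
  unfold wdot
  rw [← Finset.sum_add_distrib]
  refine Finset.sum_congr rfl fun i _ => ?_
  simp [Finsupp.add_apply, mul_add]

lemma coeff_initForm (ω : Fin n → ℝ) (f : MvPolynomial (Fin n) K) (γ : Fin n →₀ ℕ) :
    coeff γ (initForm ω f) =
      if γ ∈ f.support ∧ ∀ β ∈ f.support, wdot ω β ≤ wdot ω γ then f.coeff γ else 0 := by
  classical
  unfold initForm
  rw [coeff_sum]
  simp only [coeff_monomial]
  rw [Finset.sum_ite_eq']
  simp [Finset.mem_filter]

lemma mem_initForm_support {ω : Fin n → ℝ} {f : MvPolynomial (Fin n) K} {γ : Fin n →₀ ℕ} :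
    γ ∈ (initForm ω f).support ↔
      γ ∈ f.support ∧ ∀ β ∈ f.support, wdot ω β ≤ wdot ω γ := by
  classical
  constructor
  · intro hγ
    have h := mem_support_iff.mp hγ
    rw [coeff_initForm] at h
    by_cases hc : (γ ∈ f.support ∧ ∀ β ∈ f.support, wdot ω β ≤ wdot ω γ)
    · exact hc
    · rw [if_neg hc] at h
      exact absurd rfl h
  · intro hc
    rw [mem_support_iff, coeff_initForm, if_pos hc]
    exact mem_support_iff.mp hc.1

/-- `β` is the unique maximal (w.r.t. `ω`) exponent of `g`. -/
def IsMax (ω : Fin n → ℝ) (g : MvPolynomial (Fin n) K) (β : Fin n →₀ ℕ) : Prop :=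
  (initForm ω g).support = {β}

lemma isMax_mem {ω : Fin n → ℝ} {g : MvPolynomial (Fin n) K} {β : Fin n →₀ ℕ}
    (h : IsMax ω g β) : β ∈ g.support := by
  have : β ∈ (initForm ω g).support := by rw [h]; exact Finset.mem_singleton_self β
  exact (mem_initForm_support.mp this).1

lemma isMax_le {ω : Fin n → ℝ} {g : MvPolynomial (Fin n) K} {β : Fin n →₀ ℕ}
    (h : IsMax ω g β) : ∀ δ ∈ g.support, wdot ω δ ≤ wdot ω β := by
  have : β ∈ (initForm ω g).support := by rw [h]; exact Finset.mem_singleton_self β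
  exact (mem_initForm_support.mp this).2

lemma isMax_lt {ω : Fin n → ℝ} {g : MvPolynomial (Fin n) K} {β : Fin n →₀ ℕ}
    (h : IsMax ω g β) : ∀ δ ∈ g.support, δ ≠ β → wdot ω δ < wdot ω β := by
  intro δ hδ hne
  rcases lt_or_ge (wdot ω δ) (wdot ω β) with h1 | h1
  · exact h1
  · exfalso
    have hδmax : δ ∈ (initForm ω g).support := by
      rw [mem_initForm_support]
      exact ⟨hδ, fun γ hγ => (isMax_le h γ hγ).trans h1⟩
    rw [h, Finset.mem_singleton] at hδmax
    exact hne hδmax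

lemma isMax_of {ω : Fin n → ℝ} {g : MvPolynomial (Fin n) K} {β : Fin n →₀ ℕ}
    (hβ : β ∈ g.support) (hlt : ∀ δ ∈ g.support, δ ≠ β → wdot ω δ < wdot ω β) :
    IsMax ω g β := by
  unfold IsMax
  ext γ
  rw [mem_initForm_support, Finset.mem_singleton]
  constructor
  · rintro ⟨hγ, hmax⟩
    by_contra hne
    exact absurd (hmax β hβ) (not_le.mpr (hlt γ hγ hne))
  · rintro rfl
    refine ⟨hβ, fun δ hδ => ?_⟩
    rcases eq_or_ne δ γ with rfl | hne
    · exact le_refl _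
    · exact (hlt δ hδ hne).le

lemma isMax_mul {ω : Fin n → ℝ} {g h : MvPolynomial (Fin n) K} {β γ : Fin n →₀ ℕ}
    (hg : IsMax ω g β) (hh : IsMax ω h γ) : IsMax ω (g * h) (β + γ) := by
  classical
  have hβs := isMax_mem hg
  have hγs := isMax_mem hh
  have hcoeff : coeff (β + γ) (g * h) = coeff β g * coeff γ h := by
    rw [coeff_mul]
    refine Finset.sum_eq_single (β, γ) ?_ ?_
    · rintro ⟨μ, ν⟩ hmem hne
      rw [Finset.HasAntidiagonal.mem_antidiagonal] at hmem
      by_cases hμ : μ ∈ g.support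
      · by_cases hν : ν ∈ h.support
        · exfalso
          have h1 : wdot ω μ ≤ wdot ω β := isMax_le hg μ hμ
          have h2 : wdot ω ν ≤ wdot ω γ := isMax_le hh ν hν
          have hsum : wdot ω μ + wdot ω ν = wdot ω β + wdot ω γ := by
            rw [← wdot_add, ← wdot_add, hmem]
          have hμβ : μ = β := by
            by_contra hne'
            have := isMax_lt hg μ hμ hne'
            linarith
          have hνγ : ν = γ := by
            by_contra hne'
            have := isMax_lt hh ν hν hne'
            rw [hμβ] at hsum
            linarith
          exact hne (by rw [hμβ, hνγ])
        · rw [notMem_support_iff] at hν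
          simp [hν]
      · rw [notMem_support_iff] at hμ
        simp [hμ]
    · intro hni
      exfalso
      apply hni
      exact Finset.HasAntidiagonal.mem_antidiagonal.mpr rfl
  have hne0 : coeff β g * coeff γ h ≠ 0 :=
    mul_ne_zero (mem_support_iff.mp hβs) (mem_support_iff.mp hγs)
  apply isMax_of
  · rw [mem_support_iff, hcoeff]; exact hne0
  · intro δ hδ hδne
    have hδ' := MvPolynomial.support_mul _ _ hδ
    rw [Finset.mem_add] at hδ'
    obtain ⟨μ, hμ, ν, hν, rfl⟩ := hδ'
    have h1 : wdot ω μ ≤ wdot ω β := isMax_le hg μ hμ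
    have h2 : wdot ω ν ≤ wdot ω γ := isMax_le hh ν hν
    rw [wdot_add, wdot_add]
    by_cases hμβ : μ = β
    · subst hμβ
      have hνγ : ν ≠ γ := fun e => hδne (by rw [e])
      have := isMax_lt hh ν hν hνγ
      linarith
    · have := isMax_lt hg μ hμ hμβ
      linarith

lemma isMax_one (ω : Fin n → ℝ) : IsMax ω (1 : MvPolynomial (Fin n) K) 0 := by
  classical
  apply isMax_of
  · rw [mem_support_iff]; simp
  · intro δ hδ hne
    exfalso
    rw [mem_support_iff, coeff_one] at hδ
    exact hδ (by simp [Ne.symm hne])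

section Main

variable {K : Type*} [Field K] {n s : ℕ}

/-- minimal positive weight gap appearing among the supports of the `f i` (or 1). -/
noncomputable def delta0 (ω : Fin n → ℝ) (f : Fin s → MvPolynomial (Fin n) K) : ℝ :=
  (insert (1:ℝ)
    (((Finset.univ : Finset (Fin s)).biUnion fun i =>
        ((f i).support ×ˢ (f i).support).image fun p => wdot ω p.2 - wdot ω p.1).filter
      fun x => 0 < x)).min' (Finset.insert_nonempty _ _)

lemma delta0_pos (ω : Fin n → ℝ) (f : Fin s → MvPolynomial (Fin n) K) :
    0 < delta0 ω f := by
  classical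
  have h := Finset.min'_mem (insert (1:ℝ)
    (((Finset.univ : Finset (Fin s)).biUnion fun i =>
        ((f i).support ×ˢ (f i).support).image fun p => wdot ω p.2 - wdot ω p.1).filter
      fun x => 0 < x)) (Finset.insert_nonempty _ _)
  rcases Finset.mem_insert.mp h with h1 | h1
  · rw [delta0, h1]; exact one_pos
  · exact (Finset.mem_filter.mp h1).2

lemma delta0_le (ω : Fin n → ℝ) (f : Fin s → MvPolynomial (Fin n) K) (i : Fin s)
    {δ γ : Fin n →₀ ℕ} (hδ : δ ∈ (f i).support) (hγ : γ ∈ (f i).support)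
    (hlt : wdot ω δ < wdot ω γ) : delta0 ω f ≤ wdot ω γ - wdot ω δ := by
  classical
  apply Finset.min'_le
  apply Finset.mem_insert_of_mem
  rw [Finset.mem_filter]
  constructor
  · exact Finset.mem_biUnion.mpr ⟨i, Finset.mem_univ i,
      Finset.mem_image.mpr ⟨(δ, γ), Finset.mem_product.mpr ⟨hδ, hγ⟩, rfl⟩⟩
  · linarith

/-- A good witness for the exponent `β`. -/
def Good (ω ω' : Fin n → ℝ) (f : Fin s → MvPolynomial (Fin n) K)
    (β : Fin n →₀ ℕ) (h : MvPolynomial (Fin n) K) : Prop :=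
  h ∈ Algebra.adjoin K (Set.range f) ∧ h ≠ 0 ∧ IsMax ω h β ∧ IsMax ω' h β ∧
    ∀ δ ∈ h.support, δ ≠ β → wdot ω δ ≤ wdot ω β - delta0 ω f

lemma good_exists (ω ω' : Fin n → ℝ) (f : Fin s → MvPolynomial (Fin n) K)
    (hf : ∀ i, f i ≠ 0)
    (heq : ∀ i, initForm ω' (f i) = initForm ω (f i))
    {β : Fin n →₀ ℕ}
    (hβ : β ∈ AddSubmonoid.closure
      {α : Fin n →₀ ℕ | ∃ i, (initForm ω (f i)).support = {α}}) :
    ∃ h, Good ω ω' f β h := by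
  induction hβ using AddSubmonoid.closure_induction with
  | mem x hx =>
    obtain ⟨i, hi⟩ := hx
    have hmax : IsMax ω (f i) x := hi
    refine ⟨f i, Algebra.subset_adjoin (Set.mem_range_self i), hf i, hmax, ?_, ?_⟩
    · show (initForm ω' (f i)).support = {x}
      rw [heq i]; exact hi
    · intro δ hδ hne
      have h1 := isMax_lt hmax δ hδ hne
      have h2 := delta0_le ω f i hδ (isMax_mem hmax) h1
      linarith
  | zero =>
    refine ⟨1, Subalgebra.one_mem _, one_ne_zero, isMax_one ω, isMax_one ω', ?_⟩
    intro δ hδ hne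
    exfalso
    rw [mem_support_iff, MvPolynomial.coeff_one] at hδ
    exact hδ (by simp [Ne.symm hne])
  | add x y hx hy ihx ihy =>
    obtain ⟨h₁, hadj₁, hne₁, hmax₁, hmax₁', hgap₁⟩ := ihx
    obtain ⟨h₂, hadj₂, hne₂, hmax₂, hmax₂', hgap₂⟩ := ihy
    refine ⟨h₁ * h₂, Subalgebra.mul_mem _ hadj₁ hadj₂, mul_ne_zero hne₁ hne₂,
      isMax_mul hmax₁ hmax₂, isMax_mul hmax₁' hmax₂', ?_⟩
    intro δ hδ hne
    classical
    have hδ' := MvPolynomial.support_mul _ _ hδ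
    rw [Finset.mem_add] at hδ'
    obtain ⟨μ, hμ, ν, hν, rfl⟩ := hδ'
    rw [wdot_add, wdot_add]
    by_cases hμx : μ = x
    · subst hμx
      have hνy : ν ≠ y := fun e => hne (by rw [e])
      have := hgap₂ ν hν hνy
      linarith
    · have h1 := hgap₁ μ hμ hμx
      have h2 := isMax_le hmax₂ ν hν
      linarith

lemma step_lemma (ω ω' : Fin n → ℝ) (f : Fin s → MvPolynomial (Fin n) K)
    (hf : ∀ i, f i ≠ 0)
    (hterm : ∀ g ∈ Algebra.adjoin K (Set.range f), g ≠ 0 →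
      ((initForm ω g).support).card = 1)
    (heq : ∀ i, initForm ω' (f i) = initForm ω (f i))
    (hsagbi : (AddSubmonoid.closure
        {α : Fin n →₀ ℕ | ∃ i, (initForm ω (f i)).support = {α}} :
        Set (Fin n →₀ ℕ))
      = {α : Fin n →₀ ℕ | ∃ g ∈ Algebra.adjoin K (Set.range f), g ≠ 0 ∧
          (initForm ω g).support = {α}})
    {α : Fin n →₀ ℕ}
    (hα : α ∉ AddSubmonoid.closure
      {α : Fin n →₀ ℕ | ∃ i, (initForm ω (f i)).support = {α}}) :
    ∀ g, g ∈ Algebra.adjoin K (Set.range f) → g ≠ 0 → IsMax ω' g α →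
    ∃ g' h β, (g' ∈ Algebra.adjoin K (Set.range f) ∧ g' ≠ 0 ∧ IsMax ω' g' α) ∧
      Good ω ω' f β h ∧ IsMax ω g β ∧
      g'.support ⊆ g.support ∪ h.support ∧
      (∀ δ ∈ g'.support, wdot ω δ < wdot ω β) := by
  classical
  intro g hg hg0 hmax'
  obtain ⟨β, hβmax⟩ : ∃ β, IsMax ω g β := Finset.card_eq_one.mp (hterm g hg hg0)
  have hβA : β ∈ AddSubmonoid.closure
      {α : Fin n →₀ ℕ | ∃ i, (initForm ω (f i)).support = {α}} := by
    have hmem : β ∈ ({α : Fin n →₀ ℕ | ∃ g ∈ Algebra.adjoin K (Set.range f), g ≠ 0 ∧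
        (initForm ω g).support = {α}} : Set (Fin n →₀ ℕ)) := ⟨g, hg, hg0, hβmax⟩
    rw [← hsagbi] at hmem
    exact hmem
  obtain ⟨h, hhadj, hh0, hhmaxω, hhmaxω', hgap⟩ := good_exists ω ω' f hf heq hβA
  have hβα : β ≠ α := fun e => hα (e ▸ hβA)
  have hβg : β ∈ g.support := isMax_mem hβmax
  have hαg : α ∈ g.support := isMax_mem hmax'
  have hw'βα : wdot ω' β < wdot ω' α := isMax_lt hmax' β hβg hβα
  have hαh : α ∉ h.support := by
    intro hc
    have := isMax_le hhmaxω' α hc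
    linarith
  have hhβ : h.coeff β ≠ 0 := mem_support_iff.mp (isMax_mem hhmaxω)
  set c : K := g.coeff β / h.coeff β with hc
  set g' : MvPolynomial (Fin n) K := g - c • h with hg'
  have hsub : g'.support ⊆ g.support ∪ h.support := by
    refine (MvPolynomial.support_sub _ _ _).trans ?_
    exact Finset.union_subset_union_right MvPolynomial.support_smul
  have hcoeffα : g'.coeff α = g.coeff α := by
    rw [hg']
    rw [MvPolynomial.coeff_sub, MvPolynomial.coeff_smul,
      notMem_support_iff.mp hαh]
    simp
  have hαg' : α ∈ g'.support := by
    rw [mem_support_iff, hcoeffα]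
    exact mem_support_iff.mp hαg
  have hg'0 : g' ≠ 0 := fun e => by
    rw [e] at hαg'
    simp at hαg'
  have hcoeffβ : g'.coeff β = 0 := by
    rw [hg', MvPolynomial.coeff_sub, MvPolynomial.coeff_smul, smul_eq_mul, hc,
      div_mul_cancel₀ _ hhβ, sub_self]
  have hβg' : β ∉ g'.support := by
    rw [notMem_support_iff]; exact hcoeffβ
  have hmax'g' : IsMax ω' g' α := by
    apply isMax_of hαg'
    intro δ hδ hne
    rcases Finset.mem_union.mp (hsub hδ) with hδ1 | hδ1
    · exact isMax_lt hmax' δ hδ1 hne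
    · have := isMax_le hhmaxω' δ hδ1
      linarith
  refine ⟨g', h, β, ⟨?_, hg'0, hmax'g'⟩,
    ⟨hhadj, hh0, hhmaxω, hhmaxω', hgap⟩, hβmax, hsub, ?_⟩
  · exact Subalgebra.sub_mem _ hg (Subalgebra.smul_mem _ hhadj c)
  · intro δ hδ
    have hδβ : δ ≠ β := fun e => hβg' (e ▸ hδ)
    rcases Finset.mem_union.mp (hsub hδ) with hδ1 | hδ1
    · exact isMax_lt hβmax δ hδ1 hδβ
    · have := hgap δ hδ1 hδβ
      have := delta0_pos ω f
      linarith

lemma main_mem (ω ω' : Fin n → ℝ) (f : Fin s → MvPolynomial (Fin n) K)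
    (hf : ∀ i, f i ≠ 0)
    (hterm : ∀ g ∈ Algebra.adjoin K (Set.range f), g ≠ 0 →
      ((initForm ω g).support).card = 1)
    (heq : ∀ i, initForm ω' (f i) = initForm ω (f i))
    (hsagbi : (AddSubmonoid.closure
        {α : Fin n →₀ ℕ | ∃ i, (initForm ω (f i)).support = {α}} :
        Set (Fin n →₀ ℕ))
      = {α : Fin n →₀ ℕ | ∃ g ∈ Algebra.adjoin K (Set.range f), g ≠ 0 ∧
          (initForm ω g).support = {α}})
    {α : Fin n →₀ ℕ} {g : MvPolynomial (Fin n) K}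
    (hg : g ∈ Algebra.adjoin K (Set.range f)) (hg0 : g ≠ 0) (hmax : IsMax ω' g α) :
    α ∈ AddSubmonoid.closure
      {α : Fin n →₀ ℕ | ∃ i, (initForm ω (f i)).support = {α}} := by
  classical
  by_contra hα
  have step := step_lemma ω ω' f hf hterm heq hsagbi hα
  let St := {g : MvPolynomial (Fin n) K //
    g ∈ Algebra.adjoin K (Set.range f) ∧ g ≠ 0 ∧ IsMax ω' g α}
  have stepSt : ∀ st : St, ∃ p : St × MvPolynomial (Fin n) K × (Fin n →₀ ℕ),
      Good ω ω' f p.2.2 p.2.1 ∧ IsMax ω st.1 p.2.2 ∧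
      (p.1.1.support ⊆ st.1.support ∪ p.2.1.support) ∧
      (∀ δ ∈ p.1.1.support, wdot ω δ < wdot ω p.2.2) := by
    intro st
    obtain ⟨g', h, β, hst, hgood, hmaxβ, hsub, hlt⟩ :=
      step st.1 st.2.1 st.2.2.1 st.2.2.2
    exact ⟨⟨⟨g', hst⟩, h, β⟩, hgood, hmaxβ, hsub, hlt⟩
  choose F hF1 hF2 hF3 hF4 using stepSt
  set next : St → St := fun st => (F st).1 with hnext
  set seq : ℕ → St := fun k => next^[k] ⟨g, hg, hg0, hmax⟩ with hseqdef
  have hseq : ∀ k, seq (k+1) = next (seq k) := fun k => by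
    rw [hseqdef]
    exact Function.iterate_succ_apply' next k _
  set G : ℕ → MvPolynomial (Fin n) K := fun k => (seq k).1 with hG
  set H : ℕ → MvPolynomial (Fin n) K := fun k => (F (seq k)).2.1 with hH
  set B : ℕ → (Fin n →₀ ℕ) := fun k => (F (seq k)).2.2 with hB
  have fGood : ∀ k, Good ω ω' f (B k) (H k) := fun k => hF1 (seq k)
  have fMax : ∀ k, IsMax ω (G k) (B k) := fun k => hF2 (seq k)
  have fMax' : ∀ k, IsMax ω' (G k) α := fun k => (seq k).2.2.2
  have hGsucc : ∀ k, G (k+1) = (F (seq k)).1.1 := fun k => by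
    show ((seq (k+1) : St) : MvPolynomial (Fin n) K) = _
    rw [hseq k]
  have fSub : ∀ k, (G (k+1)).support ⊆ (G k).support ∪ (H k).support := fun k => by
    rw [hGsucc k]; exact hF3 (seq k)
  have fLt : ∀ k, ∀ δ ∈ (G (k+1)).support, wdot ω δ < wdot ω (B k) := fun k => by
    rw [hGsucc k]; exact hF4 (seq k)
  have hBmem : ∀ k, B k ∈ (G k).support := fun k => isMax_mem (fMax k)
  have hanti : ∀ k, wdot ω (B (k+1)) < wdot ω (B k) := fun k =>
    fLt k _ (hBmem (k+1))
  have hstrict : StrictAnti (fun k => wdot ω (B k)) := strictAnti_nat_of_succ_lt hanti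
  have hlb : ∀ k, wdot ω α ≤ wdot ω (B k) := fun k =>
    isMax_le (fMax k) α (isMax_mem (fMax' k))
  have hbdd : BddBelow (Set.range fun k => wdot ω (B k)) := by
    refine ⟨wdot ω α, ?_⟩
    rintro x ⟨k, rfl⟩
    exact hlb k
  set c : ℝ := ⨅ k, wdot ω (B k) with hcdef
  have hcle : ∀ k, c ≤ wdot ω (B k) := fun k => ciInf_le hbdd k
  obtain ⟨k₀, hk₀⟩ : ∃ k₀, wdot ω (B k₀) < c + delta0 ω f := by
    by_contra hcon
    push_neg at hcon
    have : c + delta0 ω f ≤ c := le_ciInf hcon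
    have := delta0_pos ω f
    linarith
  have hsupp : ∀ k, (G k).support ⊆
      (G 0).support ∪ (Finset.range k).biUnion (fun j => (H j).support) := by
    intro k
    induction k with
    | zero => simp
    | succ k ih =>
      refine (fSub k).trans ?_
      intro δ hδ
      rcases Finset.mem_union.mp hδ with h1 | h1
      · rcases Finset.mem_union.mp (ih h1) with h2 | h2
        · exact Finset.mem_union_left _ h2
        · obtain ⟨j, hj1, hj2⟩ := Finset.mem_biUnion.mp h2
          exact Finset.mem_union_right _ (Finset.mem_biUnion.mpr
            ⟨j, Finset.mem_range.mpr ((Finset.mem_range.mp hj1).trans (Nat.lt_succ_self k)), hj2⟩)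
      · exact Finset.mem_union_right _ (Finset.mem_biUnion.mpr
          ⟨k, Finset.mem_range.mpr (Nat.lt_succ_self k), h1⟩)
  set T : Finset (Fin n →₀ ℕ) :=
    (G 0).support ∪ (Finset.range k₀).biUnion (fun j => (H j).support) with hT
  have hTmem : ∀ k, k₀ ≤ k → B (k+1) ∈ T := by
    intro k hk
    have h1 := hsupp (k+1) (hBmem (k+1))
    rcases Finset.mem_union.mp h1 with h0 | hj
    · exact Finset.mem_union_left _ h0
    · obtain ⟨j, hjr, hjs⟩ := Finset.mem_biUnion.mp hj
      have hjk : j < k + 1 := Finset.mem_range.mp hjr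
      by_cases hjk₀ : j < k₀
      · exact Finset.mem_union_right _ (Finset.mem_biUnion.mpr
          ⟨j, Finset.mem_range.mpr hjk₀, hjs⟩)
      · exfalso
        push_neg at hjk₀
        have hBne : B (k+1) ≠ B j := by
          intro e
          have hlt : wdot ω (B (k+1)) < wdot ω (B j) := hstrict hjk
          rw [e] at hlt
          exact lt_irrefl _ hlt
        have hgap := (fGood j).2.2.2.2 _ hjs hBne
        have hj0 : wdot ω (B j) ≤ wdot ω (B k₀) := hstrict.antitone hjk₀
        have hc1 := hcle (k+1)
        linarith
  have hBinj : Function.Injective B := by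
    intro a b e
    have : wdot ω (B a) = wdot ω (B b) := by rw [e]
    exact hstrict.injective this
  have hinj : Function.Injective (fun m : ℕ => B (m + k₀ + 1)) := by
    intro a b e
    have := hBinj e
    omega
  have hinf : (↑T : Set (Fin n →₀ ℕ)).Infinite :=
    Set.infinite_of_injective_forall_mem hinj
      (fun m => hTmem (m + k₀) (Nat.le_add_left k₀ m))
  exact hinf T.finite_toSet

end Main
end SagbiAux

theorem sagbi_invariant_under_equivalent_weight {K : Type*} [Field K] {n s : ℕ}
    (ω ω' : Fin n → ℝ) (f : Fin s → MvPolynomial (Fin n) K)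
    (hf : ∀ i, f i ≠ 0)
    (hmono : ∀ i, ((initForm ω (f i)).support).card = 1)
    (hterm : ∀ g ∈ Algebra.adjoin K (Set.range f), g ≠ 0 →
      ((initForm ω g).support).card = 1)
    (hterm' : ∀ g ∈ Algebra.adjoin K (Set.range f), g ≠ 0 →
      ((initForm ω' g).support).card = 1)
    (heq : ∀ i, initForm ω' (f i) = initForm ω (f i))
    (hsagbi : IsSagbiBasis ω f) :
    IsSagbiBasis ω' f := by
  have hs : (AddSubmonoid.closure
      {α : Fin n →₀ ℕ | ∃ i, (initForm ω (f i)).support = {α}} :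
      Set (Fin n →₀ ℕ))
    = {α : Fin n →₀ ℕ | ∃ g ∈ Algebra.adjoin K (Set.range f), g ≠ 0 ∧
        (initForm ω g).support = {α}} := hsagbi
  unfold IsSagbiBasis
  have hMset : {α : Fin n →₀ ℕ | ∃ i, (initForm ω' (f i)).support = {α}}
      = {α : Fin n →₀ ℕ | ∃ i, (initForm ω (f i)).support = {α}} := by
    simp only [heq]
  rw [hMset]
  ext γ
  simp only [SetLike.mem_coe, Set.mem_setOf_eq]
  constructor
  · intro hγ
    obtain ⟨h, hadj, h0, _, hmaxω'⟩ := SagbiAux.good_exists ω ω' f hf heq hγ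
    exact ⟨h, hadj, h0, hmaxω'.1⟩
  · rintro ⟨g, hg, hg0, hm⟩
    exact SagbiAux.main_mem ω ω' f hf hterm heq hs hg hg0 hm
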